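/- Let l ≥ 3 and (p₁, …, p_l) be as in the context. Then κ(p₁, …, p_l) = Σ_{j=1}^{l−2} ((l−j−1)·(l−j)/2) · A_j, where for each k ∈ {1, …, l−2}, N₀(k) = P·(k − Σᵢ 1/pᵢ) and A_k is the number of lattice points (x₁, …, x_l) ∈ ℤ^l with 0 ≤ xᵢ ≤ pᵢ − 1 for all i and N₀(k−1) < Σᵢ xᵢ·(P/pᵢ) ≤ N₀(k). -/

import Mathlib

open Finset

/-- Ceiling of an integer fraction. -/
private lemma ceil_div_int (a b : ℤ) (hb : 0 < b) :
    ⌈(a : ℚ) / (b : ℚ)⌉ = (a + (-a) % b) / b := by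
  have hr0 : 0 ≤ (-a) % b := Int.emod_nonneg _ hb.ne'
  have hrb : (-a) % b < b := Int.emod_lt_of_pos _ hb
  have hd : b ∣ a + (-a) % b := ⟨-((-a) / b), by rw [Int.emod_def]; ring⟩
  have hmul : (a + (-a) % b) / b * b = a + (-a) % b := Int.ediv_mul_cancel hd
  have hbQ : (0 : ℚ) < (b : ℚ) := by exact_mod_cast hb
  have h1 : ((a + -a % b) / b - 1) * b < a := by nlinarith [hmul]
  have h2 : a ≤ ((a + -a % b) / b) * b := by nlinarith [hmul]
  rw [Int.ceil_eq_iff]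
  constructor
  · rw [lt_div_iff₀ hbQ]
    exact_mod_cast h1
  · rw [div_le_iff₀ hbQ]
    exact_mod_cast h2

/-- Gauss-type sum, doubled form. -/
private lemma gauss_doubled (N : ℕ) : ∀ T : ℤ, 0 ≤ T → T ≤ N + 1 →
    (∑ q ∈ Finset.range N, min 0 (1 - T + (q : ℤ))) * 2 = -(T * (T - 1)) := by
  induction N with
  | zero =>
    intro T h0 h1
    simp only [Finset.range_zero, Finset.sum_empty, zero_mul]
    have : T = 0 ∨ T = 1 := by omega
    rcases this with h | h <;> subst h <;> ring
  | succ N ih =>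
    intro T h0 h1
    by_cases hT : T ≤ N + 1
    · rw [Finset.sum_range_succ]
      have hlast : min 0 (1 - T + (N : ℤ)) = 0 := by omega
      rw [hlast, add_zero]
      exact ih T h0 hT
    · have hT2 : T = (N : ℤ) + 2 := by omega
      subst hT2
      rw [Finset.sum_range_succ']
      have h1' : ∀ q ∈ Finset.range N,
          min 0 (1 - ((N : ℤ) + 2) + ((q + 1 : ℕ) : ℤ)) = min 0 (1 - ((N : ℤ) + 1) + (q : ℤ)) := by
        intro q _
        congr 1
        push_cast
        ring
      rw [Finset.sum_congr rfl h1']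
      have ih' := ih ((N : ℤ) + 1) (by omega) (by omega)
      have hf0 : min 0 (1 - ((N : ℤ) + 2) + ((0 : ℕ) : ℤ)) = -((N : ℤ) + 1) := by
        push_cast; omega
      rw [hf0]
      linear_combination ih'

private lemma gauss_sum (N : ℕ) (T : ℤ) (h0 : 0 ≤ T) (h1 : T ≤ N + 1) :
    ∑ q ∈ Finset.range N, min 0 (1 - T + (q : ℤ)) = -(T * (T - 1) / 2) := by
  have h := gauss_doubled N T h0 h1
  generalize hA : T * (T - 1) = A at h ⊢
  generalize hS : ∑ q ∈ Finset.range N, min 0 (1 - T + (q : ℤ)) = S at h ⊢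
  omega

theorem stmt_12 (l : ℕ) (hl : 3 ≤ l) (p : Fin l → ℕ)
    (hp1 : ∀ i, 1 < p i) (hmono : StrictMono p)
    (hcop : ∀ i j, i ≠ j → Nat.Coprime (p i) (p j))
    (e0 : ℤ) (p' : Fin l → ℕ) (hp' : ∀ i, p' i ≤ p i - 1)
    (heq : e0 * ∏ i, (p i : ℤ)
      + ∑ i, (∏ j ∈ Finset.univ.erase i, (p j : ℤ)) * (p' i : ℤ) = -1)
    (Δ : ℕ → ℤ)
    (hΔ : ∀ n : ℕ, Δ n = 1 + |e0| * n - ∑ i, ⌈(n * p' i : ℚ) / p i⌉) :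
    |∑ᶠ n : ℕ, min 0 (Δ n)| =
      ∑ j ∈ Finset.Icc 1 (l - 2),
        (((l : ℤ) - j - 1) * ((l : ℤ) - j) / 2) *
          ({x : Fin l → ℕ | (∀ i, x i ≤ p i - 1) ∧
            ((j : ℤ) - 1) * ∏ i, (p i : ℤ)
                - ∑ i, ∏ k ∈ Finset.univ.erase i, (p k : ℤ)
              < ∑ i, (x i : ℤ) * ∏ k ∈ Finset.univ.erase i, (p k : ℤ) ∧
            ∑ i, (x i : ℤ) * ∏ k ∈ Finset.univ.erase i, (p k : ℤ)
              ≤ (j : ℤ) * ∏ i, (p i : ℤ)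
                - ∑ i, ∏ k ∈ Finset.univ.erase i, (p k : ℤ)}.ncard : ℤ) := by
  classical
  -- notation
  set Q : Fin l → ℤ := fun i => ∏ k ∈ Finset.univ.erase i, (p k : ℤ) with hQdef
  have hQr : ∀ i, (∏ k ∈ Finset.univ.erase i, (p k : ℤ)) = Q i := fun i => rfl
  simp only [hQr] at heq ⊢
  set Pz : ℤ := ∏ i, (p i : ℤ) with hPzdef
  set C : ℤ := ∑ i, Q i with hCdef
  have hpz : ∀ i, (0 : ℤ) < (p i : ℤ) := fun i => by
    exact_mod_cast Nat.zero_lt_of_lt (hp1 i)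
  have hQpos : ∀ i, 0 < Q i := fun i => Finset.prod_pos fun k _ => hpz k
  have hPz : 0 < Pz := Finset.prod_pos fun i _ => hpz i
  have hQp : ∀ i, (p i : ℤ) * Q i = Pz := by
    intro i
    simp only [hQdef, hPzdef]
    exact Finset.mul_prod_erase Finset.univ (fun k => (p k : ℤ)) (Finset.mem_univ i)
  set Pn : ℕ := ∏ i, p i with hPndef
  have hPnz : (Pn : ℤ) = Pz := by
    rw [hPndef, hPzdef]
    exact Nat.cast_prod p Finset.univ
  have hPnpos : 0 < Pn := Finset.prod_pos fun i _ => Nat.zero_lt_of_lt (hp1 i)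
  haveI : Nonempty (Fin l) := ⟨⟨0, by omega⟩⟩
  have hCpos : 0 < C := Finset.sum_pos (fun i _ => hQpos i) Finset.univ_nonempty
  -- the residues s n i
  set s : ℕ → Fin l → ℤ := fun n i => (-(n : ℤ) * (p' i : ℤ)) % (p i : ℤ) with hsdef
  set S : ℕ → ℤ := fun n => ∑ i, s n i * Q i with hSdef
  have hs0 : ∀ n i, 0 ≤ s n i := fun n i => Int.emod_nonneg _ (hpz i).ne'
  have hslt : ∀ n i, s n i < (p i : ℤ) := fun n i => Int.emod_lt_of_pos _ (hpz i)
  have hS0 : ∀ n, 0 ≤ S n := fun n =>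
    Finset.sum_nonneg fun i _ => mul_nonneg (hs0 n i) (hQpos i).le
  -- e0 < 0
  have he0 : e0 < 0 := by
    have h1 : 0 ≤ ∑ i, Q i * (p' i : ℤ) :=
      Finset.sum_nonneg fun i _ => mul_nonneg (hQpos i).le (by positivity)
    nlinarith [hPz]
  have habs : |e0| = -e0 := abs_of_neg he0
  -- the ceiling values
  have hdvd : ∀ (n : ℕ) (i : Fin l), (p i : ℤ) ∣ ((n : ℤ) * (p' i : ℤ) + s n i) := by
    intro n i
    refine ⟨-((-(n : ℤ) * (p' i : ℤ)) / (p i : ℤ)), ?_⟩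
    simp only [hsdef]
    rw [Int.emod_def]
    ring
  set c : ℕ → Fin l → ℤ := fun n i => ((n : ℤ) * (p' i : ℤ) + s n i) / (p i : ℤ) with hcdef
  have hc : ∀ (n : ℕ) (i : Fin l), (p i : ℤ) * c n i = (n : ℤ) * (p' i : ℤ) + s n i := fun n i =>
    Int.mul_ediv_cancel' (hdvd n i)
  have hceil : ∀ (n : ℕ) i, ⌈((n : ℚ) * (p' i : ℚ)) / (p i : ℚ)⌉ = c n i := by
    intro n i
    have := ceil_div_int ((n : ℤ) * (p' i : ℤ)) (p i : ℤ) (hpz i)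
    simp only [hcdef, hsdef]
    push_cast at this ⊢
    rw [this]
    ring_nf
  -- the key identity  Pz * Δ n = Pz + n - S n
  have hkey : ∀ n : ℕ, Pz * Δ n = Pz + (n : ℤ) - S n := by
    intro n
    have hΔn : Δ n = 1 + (-e0) * (n : ℤ) - ∑ i, c n i := by
      rw [hΔ n, habs]
      congr 1
      exact Finset.sum_congr rfl fun i _ => hceil n i
    have hsum : Pz * (∑ i, c n i) = (n : ℤ) * (∑ i, Q i * (p' i : ℤ)) + S n := by
      rw [Finset.mul_sum, hSdef, Finset.mul_sum, ← Finset.sum_add_distrib]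
      refine Finset.sum_congr rfl fun i _ => ?_
      have h1 : Pz * c n i = Q i * ((p i : ℤ) * c n i) := by rw [← hQp i]; ring
      rw [h1, hc n i]
      ring
    rw [hΔn]
    have expand : Pz * (1 + (-e0) * (n : ℤ) - ∑ i, c n i)
        = Pz + (-e0 * Pz) * (n : ℤ) - Pz * (∑ i, c n i) := by ring
    rw [expand, hsum]
    linear_combination (-(n : ℤ)) * heq
  -- periodicity
  have hsper : ∀ (q m : ℕ) i, s (q * Pn + m) i = s m i := by
    intro q m i
    have h1 : ((q * Pn + m : ℕ) : ℤ) = (q : ℤ) * ((p i : ℤ) * Q i) + (m : ℤ) := by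
      push_cast
      rw [hQp i, ← hPnz]
    show (-(((q * Pn + m : ℕ) : ℤ)) * (p' i : ℤ)) % (p i : ℤ) = (-(m : ℤ) * (p' i : ℤ)) % (p i : ℤ)
    rw [show (-(((q * Pn + m : ℕ) : ℤ)) * (p' i : ℤ))
        = -(m : ℤ) * (p' i : ℤ) + (p i : ℤ) * (-((q : ℤ) * Q i * (p' i : ℤ))) from by
      rw [h1]; ring]
    apply Int.add_mul_emod_self_left
  have hSper : ∀ q m : ℕ, S (q * Pn + m) = S m := by
    intro q m
    exact Finset.sum_congr rfl fun i _ => by rw [hsper q m i]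
  have hΔper : ∀ q m : ℕ, Δ (q * Pn + m) = Δ m + q := by
    intro q m
    have h1 := hkey (q * Pn + m)
    rw [hSper q m] at h1
    have h2 := hkey m
    have h3 : ((q * Pn + m : ℕ) : ℤ) = (q : ℤ) * Pz + (m : ℤ) := by
      push_cast [hPnz]; ring
    rw [h3] at h1
    have h4 : Pz * Δ (q * Pn + m) = Pz * (Δ m + (q : ℤ)) := by
      rw [h1]; linear_combination -h2
    exact mul_left_cancel₀ hPz.ne' h4
  -- T m := 1 - Δ m
  set T : ℕ → ℤ := fun m => 1 - Δ m with hTdef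
  have hTkey : ∀ m : ℕ, Pz * T m = S m - (m : ℤ) := by
    intro m
    have h := hkey m
    simp only [hTdef]
    linear_combination -h
  have hSub : ∀ m : ℕ, S m ≤ (l : ℤ) * Pz - C := by
    intro m
    have h1 : S m ≤ ∑ i, ((p i : ℤ) - 1) * Q i := by
      refine Finset.sum_le_sum fun i _ => ?_
      exact mul_le_mul_of_nonneg_right (by linarith [hslt m i]) (hQpos i).le
    have h2 : ∑ i, ((p i : ℤ) - 1) * Q i = (l : ℤ) * Pz - C := by
      have h3 : ∀ i ∈ Finset.univ, ((p i : ℤ) - 1) * Q i = Pz - Q i := fun i _ => by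
        rw [← hQp i]; ring
      rw [Finset.sum_congr rfl h3, Finset.sum_sub_distrib, Finset.sum_const,
        Finset.card_univ, Fintype.card_fin, nsmul_eq_mul, hCdef]
    linarith
  have hT0 : ∀ m : ℕ, m < Pn → 0 ≤ T m := by
    intro m hm
    by_contra h
    push_neg at h
    have h1 : T m ≤ -1 := by omega
    have h2 : Pz * T m ≤ Pz * (-1) := by
      exact mul_le_mul_of_nonneg_left h1 hPz.le
    have h3 : (m : ℤ) < Pz := by rw [← hPnz]; exact_mod_cast hm
    have := hTkey m
    have := hS0 m
    linarith
  have hTl : ∀ m : ℕ, T m ≤ (l : ℤ) - 1 := by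
    intro m
    by_contra h
    push_neg at h
    have h1 : (l : ℤ) ≤ T m := by omega
    have h2 : Pz * (l : ℤ) ≤ Pz * T m := mul_le_mul_of_nonneg_left h1 hPz.le
    have h3 := hTkey m
    have h4 := hSub m
    have h5 : (0 : ℤ) ≤ (m : ℤ) := by positivity
    linarith
  -- the finsum reduces to a finite sum
  have hsupp : Function.support (fun n => min 0 (Δ n)) ⊆ ↑(Finset.range ((l - 2) * Pn)) := by
    intro n hn
    simp only [Finset.coe_range, Set.mem_Iio]
    by_contra hmem
    push_neg at hmem
    have hdiv : l - 2 ≤ n / Pn := (Nat.le_div_iff_mul_le hPnpos).mpr hmem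
    have hn2 : n = (n / Pn) * Pn + n % Pn := by
      rw [mul_comm]
      exact (Nat.div_add_mod n Pn).symm
    have h1 : Δ n = Δ (n % Pn) + (n / Pn : ℕ) := by
      conv_lhs => rw [hn2]
      exact hΔper _ _
    have h2 : T (n % Pn) ≤ (l : ℤ) - 1 := hTl _
    have h3 : ((l : ℤ) - 2) ≤ ((n / Pn : ℕ) : ℤ) := by
      have : ((l - 2 : ℕ) : ℤ) ≤ ((n / Pn : ℕ) : ℤ) := by exact_mod_cast hdiv
      omega
    have h4 : 0 ≤ Δ n := by
      rw [h1]
      have : Δ (n % Pn) = 1 - T (n % Pn) := by simp only [hTdef]; ring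
      omega
    have : min 0 (Δ n) = 0 := min_eq_left h4
    exact hn this
  have hfin : ∑ᶠ n : ℕ, min 0 (Δ n) = ∑ n ∈ Finset.range ((l - 2) * Pn), min 0 (Δ n) :=
    finsum_eq_sum_of_support_subset _ hsupp
  -- splitting the range
  have hstep1 : ∀ k : ℕ, ∑ n ∈ Finset.range (k * Pn), min 0 (Δ n)
      = ∑ m ∈ Finset.range Pn, ∑ q ∈ Finset.range k, min 0 (Δ m + q) := by
    intro k
    induction k with
    | zero => simp
    | succ k ih =>
      rw [Nat.succ_mul, Finset.sum_range_add, ih]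
      have h1 : ∀ x ∈ Finset.range Pn, min 0 (Δ (k * Pn + x)) = min 0 (Δ x + k) := by
        intro x _
        rw [hΔper k x]
      rw [Finset.sum_congr rfl h1, ← Finset.sum_add_distrib]
      exact Finset.sum_congr rfl fun m _ => (Finset.sum_range_succ _ k).symm
  -- inner sums
  have hinner : ∀ m ∈ Finset.range Pn,
      ∑ q ∈ Finset.range (l - 2), min 0 (Δ m + q) = -(T m * (T m - 1) / 2) := by
    intro m hm
    have hm' : m < Pn := Finset.mem_range.mp hm
    have h1 : ∀ q ∈ Finset.range (l - 2), min 0 (Δ m + (q : ℤ)) = min 0 (1 - T m + (q : ℤ)) := by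
      intro q _
      simp only [hTdef]
      congr 1
      ring
    rw [Finset.sum_congr rfl h1]
    refine gauss_sum (l - 2) (T m) (hT0 m hm') ?_
    have := hTl m
    have h2 : ((l - 2 : ℕ) : ℤ) = (l : ℤ) - 2 := by omega
    omega
  have htotal : ∑ᶠ n : ℕ, min 0 (Δ n) = -∑ m ∈ Finset.range Pn, (T m * (T m - 1) / 2) := by
    rw [hfin, hstep1 (l - 2), Finset.sum_congr rfl hinner, Finset.sum_neg_distrib]
  -- nonnegativity of the summands
  have hfnn : ∀ m ∈ Finset.range Pn, 0 ≤ T m * (T m - 1) / 2 := by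
    intro m hm
    have h0 := hT0 m (Finset.mem_range.mp hm)
    have : 0 ≤ T m * (T m - 1) := by
      rcases (by omega : T m = 0 ∨ 1 ≤ T m) with h | h
      · rw [h]; norm_num
      · nlinarith
    exact Int.ediv_nonneg this (by norm_num)
  have habs2 : |∑ᶠ n : ℕ, min 0 (Δ n)| = ∑ m ∈ Finset.range Pn, (T m * (T m - 1) / 2) := by
    rw [htotal, abs_neg, abs_of_nonneg (Finset.sum_nonneg hfnn)]
  rw [habs2]
  -- fiberwise decomposition
  have hmaps : ∀ m ∈ Finset.range Pn, (T m).toNat ∈ Finset.range l := by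
    intro m hm
    have h0 := hT0 m (Finset.mem_range.mp hm)
    have h1 := hTl m
    simp only [Finset.mem_range]
    omega
  have hfib : ∑ m ∈ Finset.range Pn, (T m * (T m - 1) / 2)
      = ∑ t ∈ Finset.range l,
          (((Finset.range Pn).filter (fun m => (T m).toNat = t)).card : ℤ)
            * ((t : ℤ) * ((t : ℤ) - 1) / 2) := by
    rw [← Finset.sum_fiberwise_of_maps_to hmaps (fun m => T m * (T m - 1) / 2)]
    refine Finset.sum_congr rfl fun t _ => ?_
    have h1 : ∀ m ∈ (Finset.range Pn).filter (fun m => (T m).toNat = t),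
        T m * (T m - 1) / 2 = (t : ℤ) * ((t : ℤ) - 1) / 2 := by
      intro m hm
      rw [Finset.mem_filter] at hm
      have h0 := hT0 m (Finset.mem_range.mp hm.1)
      have h2 : T m = (t : ℤ) := by omega
      rw [h2]
    rw [Finset.sum_congr rfl h1, Finset.sum_const, nsmul_eq_mul]
  rw [hfib]
  have hQdvd : ∀ i k : Fin l, i ≠ k → (p i : ℤ) ∣ Q k := by
    intro i k h
    simp only [hQdef]
    exact Finset.dvd_prod_of_mem (fun j => (p j : ℤ)) (by simp [Finset.mem_erase, h])
  have hcong : ∀ i, (p i : ℤ) ∣ (Q i * (p' i : ℤ) + 1) := by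
    intro i
    have hsplit : Q i * (p' i : ℤ) + ∑ k ∈ Finset.univ.erase i, Q k * (p' k : ℤ)
        = ∑ k, Q k * (p' k : ℤ) :=
      Finset.add_sum_erase Finset.univ (fun k => Q k * (p' k : ℤ)) (Finset.mem_univ i)
    have h1 : Q i * (p' i : ℤ) + 1
        = -(e0 * Pz) - ∑ k ∈ Finset.univ.erase i, Q k * (p' k : ℤ) := by
      linarith [heq, hsplit]
    rw [h1]
    refine dvd_sub (dvd_neg.mpr ?_) (Finset.dvd_sum fun k hk => ?_)
    · exact Dvd.dvd.mul_left ⟨Q i, (hQp i).symm⟩ e0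
    · have hik : i ≠ k := by
        rw [Finset.mem_erase] at hk
        exact fun h => hk.1 h.symm
      exact Dvd.dvd.mul_right (hQdvd i k hik) _
  have hsum1 : ∑ i, ((p i : ℤ) - 1) * Q i = (l : ℤ) * Pz - C := by
    have h3 : ∀ i ∈ Finset.univ, ((p i : ℤ) - 1) * Q i = Pz - Q i := fun i _ => by
      rw [← hQp i]; ring
    rw [Finset.sum_congr rfl h3, Finset.sum_sub_distrib, Finset.sum_const,
      Finset.card_univ, Fintype.card_fin, nsmul_eq_mul, hCdef]
  -- cardinality of the fibers
  have hcard : ∀ j : ℕ, 1 ≤ j → j ≤ l - 2 →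
      ((((Finset.range Pn).filter (fun m => (T m).toNat = l - j)).card : ℤ))
        = (({x : Fin l → ℕ | (∀ i, x i ≤ p i - 1) ∧
            ((j : ℤ) - 1) * Pz - C < ∑ i, (x i : ℤ) * Q i ∧
            ∑ i, (x i : ℤ) * Q i ≤ (j : ℤ) * Pz - C}).ncard : ℤ) := by
    intro j hj1 hj2
    set F : Finset ℕ := (Finset.range Pn).filter (fun m => (T m).toNat = l - j) with hFdef
    set g : ℕ → (Fin l → ℕ) := fun m i => p i - 1 - (s m i).toNat with hgdef
    have hmemF : ∀ m ∈ F, m < Pn ∧ T m = (l : ℤ) - j := by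
      intro m hm
      rw [hFdef, Finset.mem_filter, Finset.mem_range] at hm
      refine ⟨hm.1, ?_⟩
      have h0 := hT0 m hm.1
      have h2 := hm.2
      omega
    have hSval : ∀ m ∈ F, S m = ((l : ℤ) - j) * Pz + m := by
      intro m hm
      obtain ⟨h1, h2⟩ := hmemF m hm
      have h3 := hTkey m
      rw [h2] at h3
      linarith
    have hgS : ∀ m : ℕ, ∑ i, ((g m i : ℕ) : ℤ) * Q i = (l : ℤ) * Pz - C - S m := by
      intro m
      have h1 : ∀ i ∈ Finset.univ, ((g m i : ℕ) : ℤ) * Q i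
          = ((p i : ℤ) - 1) * Q i - s m i * Q i := by
        intro i _
        have hcast : ((g m i : ℕ) : ℤ) = (p i : ℤ) - 1 - s m i := by
          simp only [hgdef]
          have h4 := hs0 m i
          have h5 := hslt m i
          have h6 := hp1 i
          omega
        rw [hcast]; ring
      rw [Finset.sum_congr rfl h1, Finset.sum_sub_distrib, hsum1]
    have hinj : Set.InjOn g ↑F := by
      intro m hm m' hm' hgm
      have hs_eq : ∀ i, s m i = s m' i := by
        intro i
        have h1 := congrFun hgm i
        have h2 := hs0 m i; have h3 := hslt m i
        have h4 := hs0 m' i; have h5 := hslt m' i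
        have h6 := hp1 i
        simp only [hgdef] at h1
        omega
      have hS_eq : S m = S m' :=
        Finset.sum_congr rfl fun i _ => by rw [hs_eq i]
      have hm1 := hSval m (Finset.mem_coe.mp hm)
      have hm2 := hSval m' (Finset.mem_coe.mp hm')
      have : (m : ℤ) = (m' : ℤ) := by linarith [hm1, hm2, hS_eq]
      exact_mod_cast this
    have himg : g '' ↑F = {x : Fin l → ℕ | (∀ i, x i ≤ p i - 1) ∧
        ((j : ℤ) - 1) * Pz - C < ∑ i, (x i : ℤ) * Q i ∧
        ∑ i, (x i : ℤ) * Q i ≤ (j : ℤ) * Pz - C} := by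
      ext x
      simp only [Set.mem_image, Finset.mem_coe, Set.mem_setOf_eq]
      constructor
      · rintro ⟨m, hm, rfl⟩
        obtain ⟨hmlt, hTm⟩ := hmemF m hm
        have hW := hgS m
        rw [hSval m hm] at hW
        have hmz : (m : ℤ) < Pz := by
          rw [← hPnz]; exact_mod_cast hmlt
        have hm0 : (0 : ℤ) ≤ (m : ℤ) := by positivity
        refine ⟨fun i => ?_, ?_, ?_⟩
        · simp only [hgdef]
          exact Nat.sub_le _ _
        · rw [hW]; linarith
        · rw [hW]; linarith
      · rintro ⟨hx1, hx2, hx3⟩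
        set y : Fin l → ℕ := fun i => p i - 1 - x i with hydef
        have hycast : ∀ i, ((y i : ℕ) : ℤ) = (p i : ℤ) - 1 - (x i : ℤ) := by
          intro i
          have h1 := hx1 i
          have h2 := hp1 i
          simp only [hydef]
          omega
        have hWty : ∑ i, (y i : ℤ) * Q i = (l : ℤ) * Pz - C - ∑ i, (x i : ℤ) * Q i := by
          have h1 : ∀ i ∈ Finset.univ, (y i : ℤ) * Q i
              = ((p i : ℤ) - 1) * Q i - (x i : ℤ) * Q i := fun i _ => by
            rw [hycast i]; ring
          rw [Finset.sum_congr rfl h1, Finset.sum_sub_distrib, hsum1]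
        set mZ : ℤ := ∑ i, (y i : ℤ) * Q i - ((l : ℤ) - j) * Pz with hmZdef
        have hjlz : ((j : ℤ)) ≤ (l : ℤ) - 2 := by omega
        have hmZ0 : 0 ≤ mZ := by
          rw [hmZdef, hWty]; linarith [hx3]
        have hmZlt : mZ < Pz := by
          rw [hmZdef, hWty]; linarith [hx2]
        set m : ℕ := mZ.toNat with hmdef
        have hmcast : (m : ℤ) = mZ := Int.toNat_of_nonneg hmZ0
        have hsmy : ∀ i, s m i = (y i : ℤ) := by
          intro i
          have hy0 : (0 : ℤ) ≤ (y i : ℤ) := by positivity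
          have hylt : (y i : ℤ) < (p i : ℤ) := by
            have h1 := hp1 i
            have h2 := hycast i
            have h3 := hx1 i
            omega
          have hyr : (y i : ℤ) % (p i : ℤ) = (y i : ℤ) := Int.emod_eq_of_lt hy0 hylt
          have hE : (p i : ℤ) ∣ ∑ k ∈ Finset.univ.erase i, (y k : ℤ) * Q k :=
            Finset.dvd_sum fun k hk => by
              have hik : i ≠ k := by
                rw [Finset.mem_erase] at hk
                exact fun h => hk.1 h.symm
              exact Dvd.dvd.mul_left (hQdvd i k hik) _
          have hm_eq : (m : ℤ) = (y i : ℤ) * Q i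
              + (∑ k ∈ Finset.univ.erase i, (y k : ℤ) * Q k)
              - ((l : ℤ) - j) * ((p i : ℤ) * Q i) := by
            rw [hmcast, hmZdef, hQp i,
              Finset.add_sum_erase Finset.univ (fun k => (y k : ℤ) * Q k) (Finset.mem_univ i)]
          have hdvd2 : (p i : ℤ) ∣ (-(m : ℤ) * (p' i : ℤ) - (y i : ℤ)) := by
            have hexpr : -(m : ℤ) * (p' i : ℤ) - (y i : ℤ)
                = (-(y i : ℤ)) * (Q i * (p' i : ℤ) + 1)
                  + (-(p' i : ℤ)) * (∑ k ∈ Finset.univ.erase i, (y k : ℤ) * Q k)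
                  + (((l : ℤ) - j) * Q i * (p' i : ℤ)) * (p i : ℤ) := by
              linear_combination (-(p' i : ℤ)) * hm_eq
            rw [hexpr]
            exact dvd_add (dvd_add (Dvd.dvd.mul_left (hcong i) _)
              (Dvd.dvd.mul_left hE _)) (dvd_mul_left _ _)
          show (-(m : ℤ) * (p' i : ℤ)) % (p i : ℤ) = (y i : ℤ)
          rw [← hyr, Int.emod_eq_emod_iff_emod_sub_eq_zero]
          exact Int.emod_eq_zero_of_dvd hdvd2
        have hSm : S m = ∑ i, (y i : ℤ) * Q i :=
          Finset.sum_congr rfl fun i _ => by rw [hsmy i]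
        have hTm : T m = (l : ℤ) - j := by
          have h1 := hTkey m
          rw [hSm, hmcast, hmZdef] at h1
          have h2 : Pz * T m = Pz * ((l : ℤ) - j) := by linarith
          exact mul_left_cancel₀ hPz.ne' h2
        have hmF : m ∈ F := by
          rw [hFdef, Finset.mem_filter, Finset.mem_range]
          constructor
          · have h1 : (m : ℤ) < (Pn : ℤ) := by rw [hmcast, hPnz]; exact hmZlt
            exact_mod_cast h1
          · omega
        refine ⟨m, hmF, ?_⟩
        funext i
        simp only [hgdef]
        have h1 := hsmy i
        have h2 := hx1 i
        have h3 := hp1 i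
        simp only [hydef] at h1
        omega
    calc ((F.card : ℕ) : ℤ) = (((↑F : Set ℕ).ncard : ℕ) : ℤ) := by
          rw [Set.ncard_coe_finset]
      _ = (((g '' ↑F).ncard : ℕ) : ℤ) := by rw [Set.ncard_image_of_injOn hinj]
      _ = _ := by rw [himg]
  -- reindexing
  have hzero : ∀ t ∈ Finset.range l, t ∉ Finset.Icc 2 (l - 1) →
      (((Finset.range Pn).filter (fun m => (T m).toNat = t)).card : ℤ)
        * ((t : ℤ) * ((t : ℤ) - 1) / 2) = 0 := by
    intro t ht hts
    simp only [Finset.mem_range] at ht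
    simp only [Finset.mem_Icc] at hts
    have : t = 0 ∨ t = 1 := by omega
    rcases this with h | h <;> subst h <;> simp
  have hsub : Finset.Icc 2 (l - 1) ⊆ Finset.range l := by
    intro t ht
    simp only [Finset.mem_Icc] at ht
    simp only [Finset.mem_range]
    omega
  rw [← Finset.sum_subset hsub hzero]
  refine Finset.sum_nbij' (fun t => l - t) (fun j => l - j) ?_ ?_ ?_ ?_ ?_
  · intro t ht
    simp only [Finset.mem_Icc] at ht ⊢
    omega
  · intro j hj
    simp only [Finset.mem_Icc] at hj ⊢
    omega
  · intro t ht
    simp only [Finset.mem_Icc] at ht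
    show l - (l - t) = t
    omega
  · intro j hj
    simp only [Finset.mem_Icc] at hj
    show l - (l - j) = j
    omega
  · intro t ht
    simp only [Finset.mem_Icc] at ht
    rw [← hcard (l - t) (by omega) (by omega)]
    have h2 : l - (l - t) = t := by omega
    rw [h2]
    have h1 : ((l - t : ℕ) : ℤ) = (l : ℤ) - (t : ℤ) := by omega
    rw [h1]
    have h3 : ((l : ℤ) - ((l : ℤ) - t) - 1) * ((l : ℤ) - ((l : ℤ) - t)) / 2
        = (t : ℤ) * ((t : ℤ) - 1) / 2 := by congr 1; ring
    rw [h3]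
    ring
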